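/- (2-Route 2-Bus system, congested case: type T-T Braess' paradox for some parameters.) There exist α₁, α₂, ρ, f̄ > 0 such that, with S := α₁ + α₂ + 2ρ², x₁ := (α₂ + ρ² − 2ρf̄)/S, x₂ := 1 − x₁, λ₁ := ρx₁ + f̄, λ₂ := ρx₂ − f̄, the conditions x₁ > 0 and ρ(x₂ − x₁) > 2f̄ (power line congested) hold, and the partial derivative with respect to α₁ of the transportation social cost Φ_T := α₁x₁² + α₂x₂² (with x₁, x₂ regarded as the above functions of (α₁, α₂, ρ, f̄)) is strictly negative; i.e., the 2-Route 2-Bus coupled system exhibits a type T-T Braess' paradox for certain α₁, α₂, f̄, ρ. -/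

import Mathlib

/-- 2-Route 2-Bus coupled system with congested power line: for some parameters
`α₁, α₂, ρ, f̄ > 0` satisfying `x₁ > 0` and the congestion condition, the partial
derivative of the transportation social cost `Φ_T` with respect to `α₁` is strictly
negative, i.e., a type T-T Braess' paradox occurs. -/
theorem two_route_two_bus_TT_exists :
    ∃ α₁ α₂ ρ fb : ℝ, 0 < α₁ ∧ 0 < α₂ ∧ 0 < ρ ∧ 0 < fb ∧
      0 < (α₂ + ρ ^ 2 - 2 * ρ * fb) / (α₁ + α₂ + 2 * ρ ^ 2) ∧
      2 * fb < ρ * ((1 - (α₂ + ρ ^ 2 - 2 * ρ * fb) / (α₁ + α₂ + 2 * ρ ^ 2)) -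
        (α₂ + ρ ^ 2 - 2 * ρ * fb) / (α₁ + α₂ + 2 * ρ ^ 2)) ∧
      ∃ D : ℝ, D < 0 ∧
        HasDerivAt
          (fun a : ℝ =>
            a * ((α₂ + ρ ^ 2 - 2 * ρ * fb) / (a + α₂ + 2 * ρ ^ 2)) ^ 2 +
              α₂ * (1 - (α₂ + ρ ^ 2 - 2 * ρ * fb) / (a + α₂ + 2 * ρ ^ 2)) ^ 2)
          D α₁ := by
  refine ⟨1000, 1, 10, 1, by norm_num, by norm_num, by norm_num, by norm_num,
    by norm_num, by norm_num, -5060799 / 1732323601, by norm_num, ?_⟩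
  have hden : HasDerivAt (fun a : ℝ => a + 1 + 2 * 10 ^ 2) 1 1000 := by
    simpa using ((hasDerivAt_id (1000 : ℝ)).add_const (1 : ℝ)).add_const (2 * 10 ^ 2 : ℝ)
  have hne : (1000 : ℝ) + 1 + 2 * 10 ^ 2 ≠ 0 := by norm_num
  have hu : HasDerivAt
      (fun a : ℝ => ((1 : ℝ) + 10 ^ 2 - 2 * 10 * 1) / (a + 1 + 2 * 10 ^ 2))
      ((0 * (1000 + 1 + 2 * 10 ^ 2) - ((1 : ℝ) + 10 ^ 2 - 2 * 10 * 1) * 1) /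
        (1000 + 1 + 2 * 10 ^ 2) ^ 2) 1000 :=
    (hasDerivAt_const 1000 _).div hden hne
  have h1 : HasDerivAt
      (fun a : ℝ => a * (((1 : ℝ) + 10 ^ 2 - 2 * 10 * 1) / (a + 1 + 2 * 10 ^ 2)) ^ 2)
      _ 1000 := (hasDerivAt_id 1000).mul (hu.pow 2)
  have h2 : HasDerivAt
      (fun a : ℝ => (1 : ℝ) * (1 - ((1 : ℝ) + 10 ^ 2 - 2 * 10 * 1) / (a + 1 + 2 * 10 ^ 2)) ^ 2)
      _ 1000 := (((hasDerivAt_const 1000 (1 : ℝ)).sub hu).pow 2).const_mul 1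
  have h := h1.add h2
  refine h.congr_deriv ?_
  norm_num
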